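/- arXiv:1908.03474 — 3 statements merged into one kernel-verified Lean document; each statement's English description precedes it below -/
import Mathlib

section
/- The character of G induced from the trivial character of the normal subgroup Z_p equals the sum of the p−1 linear irreducible characters of G, i.e. Ind_{Z_p}^G(1_{Z_p}) = Σ_{i∈I} ψ_i; and for every nontrivial irreducible character η of Z_p ≅ ZMod p, the induced character Ind_{Z_p}^G(η) equals ψ_r, the unique irreducible character of G of degree p−1 (in particular this induced character is irreducible). -/
open scoped Classical

noncomputable section

namespace BrGrFormal

/-! ### The groups `H = (ZMod p)ˣ` and `G = ZMod p ⋊ (ZMod p)ˣ` -/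

/-- The action of `(ZMod p)ˣ` on the (multiplicatively written) additive group `ZMod p`,
by multiplication. -/
def mulAction (p : ℕ) : (ZMod p)ˣ →* MulAut (Multiplicative (ZMod p)) where
  toFun u :=
    { toFun := fun z => Multiplicative.ofAdd (u • z.toAdd)
      invFun := fun z => Multiplicative.ofAdd (u⁻¹ • z.toAdd)
      left_inv := fun z => by simp
      right_inv := fun z => by simp
      map_mul' := fun z w => by simp [toAdd_mul, smul_add, ofAdd_add] }
  map_one' := by ext z; simp
  map_mul' := fun u v => by ext z; simp [mul_smul]

/-- The group `G = ZMod p ⋊ (ZMod p)ˣ`. -/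
abbrev Gp (p : ℕ) := Multiplicative (ZMod p) ⋊[mulAction p] (ZMod p)ˣ

instance {N G : Type*} [Group N] [Group G] {φ : G →* MulAut N} [Fintype N] [Fintype G] :
    Fintype (N ⋊[φ] G) :=
  Fintype.ofEquiv (N × G)
    { toFun := fun x => ⟨x.1, x.2⟩
      invFun := fun g => (g.left, g.right)
      left_inv := fun _ => rfl
      right_inv := fun _ => rfl }

/-! ### Characters -/

/-- `χ : G → ℂ` is an irreducible (complex) character of the group `G` if it is the
character of some irreducible (simple) finite-dimensional complex representation of `G`. -/
def IsIrrChar (G : Type) [Group G] (χ : G → ℂ) : Prop :=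
  ∃ V : FDRep ℂ G, CategoryTheory.Simple V ∧ χ = fun g => V.character g

/-- The usual inner product of class functions on a finite group. -/
def cfInner (Γ : Type) [Group Γ] [Fintype Γ] (u v : Γ → ℂ) : ℂ :=
  (Fintype.card Γ : ℂ)⁻¹ * ∑ g : Γ, u g * (starRingEnd ℂ) (v g)

/-- Induction of a class function along an (injective) group homomorphism `φ : K →* Γ`:
`Ind_K^Γ ψ (g) = |K|⁻¹ ∑_{x ∈ Γ} ∑_{y ∈ K, φ y = x⁻¹gx} ψ (y)`. -/
def indHom {K Γ : Type} [Group K] [Fintype K] [Group Γ] [Fintype Γ]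
    (φ : K →* Γ) (ψ : K → ℂ) : Γ → ℂ :=
  fun g => (Fintype.card K : ℂ)⁻¹ * ∑ x : Γ, ∑ y : K, if φ y = x⁻¹ * g * x then ψ y else 0

/-- Induction of a class function from a subgroup:
`Ind_K^Γ ψ (g) = |K|⁻¹ ∑_{x ∈ Γ, x⁻¹gx ∈ K} ψ (x⁻¹gx)`. -/
def indSub {Γ : Type} [Group Γ] [Fintype Γ] (K : Subgroup Γ) (ψ : Γ → ℂ) : Γ → ℂ :=
  fun g => (Nat.card K : ℂ)⁻¹ * ∑ x : Γ, if x⁻¹ * g * x ∈ K then ψ (x⁻¹ * g * x) else 0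


/-! ### Auxiliary representation-theoretic lemmas -/

section Aux

open CategoryTheory Module

variable {Γ : Type} [Group Γ]

/-- The one-dimensional representation attached to a homomorphism `f : Γ →* ℂ`. -/
def homRep (f : Γ →* ℂ) : Representation ℂ Γ ℂ where
  toFun g := LinearMap.mulLeft ℂ (f g)
  map_one' := LinearMap.ext fun x => by simp
  map_mul' g h := LinearMap.ext fun x => by
    simp [Module.End.mul_apply, mul_assoc]

/-- The one-dimensional `FDRep` attached to a homomorphism `f : Γ →* ℂ`. -/
def homFDRep (f : Γ →* ℂ) : FDRep ℂ Γ := FDRep.of (homRep f)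

/-- The subrepresentation of `Y` on an invariant submodule `K`. -/
def subRep (Y : FDRep ℂ Γ) (K : Submodule ℂ Y) (hK : ∀ g : Γ, ∀ x ∈ K, Y.ρ g x ∈ K) :
    FDRep ℂ Γ :=
  FDRep.of (V := K)
    { toFun := fun g => (Y.ρ g).restrict (fun x hx => hK g x hx)
      map_one' := by
        apply LinearMap.ext
        intro x
        apply Subtype.ext
        simp [LinearMap.restrict_apply]
      map_mul' := fun g h => by
        apply LinearMap.ext
        intro x
        apply Subtype.ext
        simp [LinearMap.restrict_apply] }

/-- The inclusion of a subrepresentation. -/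
def subRepIncl (Y : FDRep ℂ Γ) (K : Submodule ℂ Y) (hK : ∀ g : Γ, ∀ x ∈ K, Y.ρ g x ∈ K) :
    subRep Y K hK ⟶ Y where
  hom := ConcreteCategory.ofHom K.subtype
  comm := fun g => by
    ext x
    rfl

lemma simple_homFDRep (f : Γ →* ℂ) : Simple (homFDRep f) := by
  constructor
  intro Y φ hm
  constructor
  · intro hiso h0
    have h1 := IsIso.inv_hom_id φ
    have h2 := congrArg (fun (ψ : homFDRep f ⟶ homFDRep f) => ψ.hom (1 : ℂ)) h1
    simp only [h0] at h2
    exact zero_ne_one (show (0 : ℂ) = 1 from h2)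
  · intro hne
    set F : (Y : Type) →ₗ[ℂ] ℂ := φ.hom.hom.hom with hF
    have hcomm : ∀ (g : Γ) (y : Y), F (Y.ρ g y) = (homFDRep f).ρ g (F y) := by
      intro g y
      exact LinearMap.congr_fun (congrArg (fun ψ => ψ.hom.hom) (φ.comm g)) y
    set K : Submodule ℂ Y := LinearMap.ker F with hKdef
    have hK : ∀ g : Γ, ∀ x ∈ K, Y.ρ g x ∈ K := by
      intro g x hx
      have hx0 : F x = 0 := hx
      have : F (Y.ρ g x) = 0 := by
        rw [hcomm g x, hx0]
        exact map_zero _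
      exact this
    have hzero : subRepIncl Y K hK ≫ φ = 0 := by
      ext x
      show F (K.subtype x) = 0
      exact x.2
    have hι : subRepIncl Y K hK = 0 := by
      rw [← cancel_mono φ, hzero, Limits.zero_comp]
    have hinj : Function.Injective F := by
      rw [← LinearMap.ker_eq_bot, ← hKdef, Submodule.eq_bot_iff]
      intro x hx
      have := congrArg (fun (ψ : subRep Y K hK ⟶ Y) => ψ.hom.hom.hom ⟨x, hx⟩) hι
      exact this
    have hsurj : Function.Surjective F := by
      have hφ0 : F ≠ 0 := by
        intro h
        apply hne
        ext y
        exact LinearMap.congr_fun h y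
      obtain ⟨y, hy⟩ : ∃ y : Y, F y ≠ 0 := by
        by_contra h
        push_neg at h
        exact hφ0 (LinearMap.ext h)
      intro c
      refine ⟨(c / F y) • y, ?_⟩
      rw [map_smul]
      show (c / F y) • F y = c
      rw [smul_eq_mul]
      field_simp
    let e : (Y : Type) ≃ₗ[ℂ] ℂ := LinearEquiv.ofBijective F ⟨hinj, hsurj⟩
    have : IsIso φ.hom := by
      have hiso : IsIso ((@LinearEquiv.toFGModuleCatIso ℂ _ (Y : Type) ℂ _ _ _ _ _ _ e).hom) :=
        inferInstance
      exact (show φ.hom = (e.toFGModuleCatIso).hom from rfl) ▸ hiso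
    exact Action.isIso_of_hom_isIso φ

lemma char_homFDRep (f : Γ →* ℂ) (g : Γ) : (homFDRep f).character g = f g := by
  unfold FDRep.character
  have h1 : (homFDRep f).ρ g = LinearMap.mulLeft ℂ (f g) := rfl
  rw [h1]
  show LinearMap.trace ℂ ℂ (LinearMap.mulLeft ℂ (f g)) = f g
  have h2 : LinearMap.mulLeft ℂ (f g) = (f g) • (LinearMap.id : ℂ →ₗ[ℂ] ℂ) := by
    apply LinearMap.ext
    intro x
    simp
  rw [h2, map_smul, LinearMap.trace_id]
  have h3 : finrank ℂ ℂ = 1 := finrank_self ℂ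
  simp

lemma isIrrChar_of_hom (f : Γ →* ℂ) : IsIrrChar Γ ⇑f :=
  ⟨homFDRep f, simple_homFDRep f, funext fun g => (char_homFDRep f g).symm⟩

end Aux

section AuxComm

open CategoryTheory Module

lemma char_hom_of_simple {Γ : Type} [CommGroup Γ] [Fintype Γ] (V : FDRep ℂ Γ) (hs : Simple V) :
    ∃ f : Γ →* ℂ, (fun g => V.character g) = ⇑f := by
  haveI := hs
  have hfr : finrank ℂ (V ⟶ V) = 1 := by
    rw [FDRep.finrank_hom_simple_simple]
    simp only [Nonempty.intro (Iso.refl V), if_true]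
  have hall := (finrank_eq_one_iff_of_nonzero' (𝟙 V) (id_nonzero V)).mp hfr
  have hsc : ∀ g : Γ, ∃ c : ℂ, V.ρ g = c • LinearMap.id := by
    intro g
    obtain ⟨c, hc⟩ := hall
      { hom := Action.ρ V g
        comm := fun h => by
          ext x
          show V.ρ g (V.ρ h x) = V.ρ h (V.ρ g x)
          rw [← Module.End.mul_apply, ← map_mul, mul_comm, map_mul, Module.End.mul_apply] }
    refine ⟨c, ?_⟩
    ext x
    have := congrArg (fun ψ : V ⟶ V => ψ.hom.hom.hom x) hc
    exact this.symm
  choose c hc using hsc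
  obtain ⟨v₀, hv₀⟩ : ∃ v : V, v ≠ 0 := by
    by_contra h
    push_neg at h
    apply id_nonzero V
    ext v
    show _ = (0 : V →ₗ[ℂ] V) v
    simp [h v]
  have happ : ∀ g (v : V), V.ρ g v = c g • v := by
    intro g v; rw [hc g]; rfl
  have hc1 : c 1 = 1 := by
    have : V.ρ 1 v₀ = c 1 • v₀ := happ 1 v₀
    rw [map_one] at this
    have h2 : c 1 • v₀ = (1 : ℂ) • v₀ := by rw [← this]; simp
    exact smul_left_injective ℂ hv₀ h2
  have hcm : ∀ g h : Γ, c (g * h) = c g * c h := by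
    intro g h
    have h1 : V.ρ (g * h) v₀ = c (g * h) • v₀ := happ _ _
    rw [map_mul, Module.End.mul_apply] at h1
    have h2 : (V.ρ g) ((V.ρ h) v₀) = (c g * c h) • v₀ := by
      rw [happ, happ, smul_smul]
    rw [h2] at h1
    exact (smul_left_injective ℂ hv₀ h1).symm
  set d : ℕ := finrank ℂ V with hd
  have hch : ∀ g, V.character g = c g * d := by
    intro g
    unfold FDRep.character
    rw [hc g, map_smul, LinearMap.trace_id]
    simp [smul_eq_mul, hd]
  haveI : Invertible ((Nat.card Γ) : ℂ) :=
    invertibleOfNonzero (by exact_mod_cast Nat.card_pos.ne')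
  have horth := FDRep.char_orthonormal (k := ℂ) (G := Γ) V V
  rw [if_pos ⟨Iso.refl V⟩] at horth
  have hcinv : ∀ g : Γ, c g * c g⁻¹ = 1 := by
    intro g
    rw [← hcm]
    simp [hc1]
  have hsum : ∑ g : Γ, V.character g * V.character g⁻¹
      = (Fintype.card Γ : ℂ) * ((d : ℂ) * d) := by
    have h1 : ∀ g : Γ, V.character g * V.character g⁻¹ = (d : ℂ) * d := by
      intro g
      rw [hch g, hch g⁻¹]
      calc (c g * d) * (c g⁻¹ * d) = (c g * c g⁻¹) * ((d:ℂ) * d) := by ring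
      _ = (d:ℂ) * d := by rw [hcinv]; ring
    calc ∑ g : Γ, V.character g * V.character g⁻¹
        = ∑ _g : Γ, ((d : ℂ) * d) := Finset.sum_congr rfl (fun g _ => h1 g)
      _ = (Fintype.card Γ : ℂ) * ((d : ℂ) * d) := by
          rw [Finset.sum_const]
          simp [Finset.card_univ]
  rw [hsum, ← mul_assoc, ← Fintype.card_eq_nat_card,
    inv_mul_cancel₀ (by exact_mod_cast Fintype.card_ne_zero), one_mul] at horth
  have hd1 : d = 1 := by
    have : (d * d : ℕ) = 1 := by exact_mod_cast horth
    exact Nat.eq_one_of_mul_eq_one_right (by rw [this])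
  refine ⟨{ toFun := c, map_one' := hc1, map_mul' := hcm }, ?_⟩
  funext g
  show V.character g = c g
  rw [hch g, hd1]
  simp

lemma hom_of_isIrrChar {Γ : Type} [CommGroup Γ] [Fintype Γ] {χ : Γ → ℂ}
    (h : IsIrrChar Γ χ) : ∃ f : Γ →* ℂ, χ = ⇑f := by
  obtain ⟨V, hs, rfl⟩ := h
  exact char_hom_of_simple V hs

lemma sum_homs (Γ : Type) [CommGroup Γ] [Fintype Γ] [IsCyclic Γ] [Fintype (Γ →* ℂˣ)] (h : Γ) :
    ∑ f : Γ →* ℂˣ, ((f h : ℂ)) = if h = 1 then (Fintype.card (Γ →* ℂˣ) : ℂ) else 0 := by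
  by_cases hh : h = 1
  · subst hh
    rw [if_pos rfl,
      Finset.sum_congr rfl (fun f _ => show ((f 1 : ℂ)) = 1 by rw [map_one, Units.val_one])]
    simp [Finset.card_univ]
  · rw [if_neg hh]
    haveI : NeZero (Nat.card Γ) := ⟨Nat.card_pos.ne'⟩
    obtain ⟨ζ, hζ⟩ := HasEnoughRootsOfUnity.exists_primitiveRoot ℂ (Nat.card Γ)
    obtain ⟨φ, hφ⟩ := IsCyclic.exists_apply_ne_one (G' := ℂˣ)
      ⟨(hζ.isUnit Nat.card_pos.ne').unit, hζ.isUnit_unit Nat.card_pos.ne'⟩ hh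
    have key : ∑ f : Γ →* ℂˣ, ((φ h : ℂ) * ((f h : ℂ))) = ∑ f : Γ →* ℂˣ, ((f h : ℂ)) :=
      Fintype.sum_bijective (fun f => φ * f) (Group.mulLeft_bijective φ)
        (fun f => (φ h : ℂ) * ((f h : ℂ))) (fun f => ((f h : ℂ))) (fun f => by simp)
    have h2 : ((φ h : ℂ) - 1) * ∑ f : Γ →* ℂˣ, ((f h : ℂ)) = 0 := by
      rw [sub_mul, one_mul, Finset.mul_sum, key, sub_self]
    rcases mul_eq_zero.mp h2 with h3 | h3
    · exfalso
      apply hφ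
      apply Units.ext
      rw [Units.val_one]
      linear_combination h3
    · exact h3

lemma sum_irrChars {Γ : Type} [CommGroup Γ] [Fintype Γ] [IsCyclic Γ] [Fintype (Γ →* ℂˣ)]
    (hcard : Fintype.card (Γ →* ℂˣ) = Fintype.card Γ)
    (S : Finset (Γ → ℂ))
    (hS : ∀ θ, θ ∈ S ↔ IsIrrChar Γ θ) (h : Γ) :
    ∑ θ ∈ S, θ h = if h = 1 then (Fintype.card Γ : ℂ) else 0 := by
  classical
  have hinj : Function.Injective (fun f : Γ →* ℂˣ => (fun x => ((f x : ℂ)) : Γ → ℂ)) := by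
    intro f g hfg
    ext x
    have h1 : ((f x : ℂ)) = ((g x : ℂ)) := congrFun hfg x
    exact h1
  have hSim : S = Finset.univ.image (fun f : Γ →* ℂˣ => (fun x => ((f x : ℂ)) : Γ → ℂ)) := by
    ext θ
    simp only [Finset.mem_image, Finset.mem_univ, true_and]
    rw [hS θ]
    constructor
    · intro hθ
      obtain ⟨f, hf⟩ := hom_of_isIrrChar hθ
      rw [hf]
      exact ⟨f.toHomUnits, by ext x; simp [MonoidHom.coe_toHomUnits]⟩
    · rintro ⟨f, rfl⟩
      have : (fun x => ((f x : ℂ)) : Γ → ℂ) = ⇑((Units.coeHom ℂ).comp f) := rfl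
      rw [this]
      exact isIrrChar_of_hom _
  rw [hSim, Finset.sum_image (fun f _ g _ hfg => hinj hfg)]
  rw [show (∑ f : Γ →* ℂˣ, (fun x => ((f x : ℂ)) : Γ → ℂ) h) = ∑ f : Γ →* ℂˣ, ((f h : ℂ)) from rfl]
  rw [sum_homs, hcard]

end AuxComm

section AuxGp

variable {p : ℕ} [Fact p.Prime]

/-- The product decomposition of `Gp p` as a type. -/
def prodEquiv (p : ℕ) : (Multiplicative (ZMod p) × (ZMod p)ˣ) ≃ Gp p where
  toFun x := ⟨x.1, x.2⟩
  invFun g := (g.left, g.right)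
  left_inv _ := rfl
  right_inv _ := rfl

lemma conj_calc (x g : Gp p) (hg : g.right = 1) :
    x⁻¹ * g * x = SemidirectProduct.inl
      (Multiplicative.ofAdd (((x.right⁻¹ : (ZMod p)ˣ) : ZMod p) * g.left.toAdd)) := by
  have hsmul : ((x.right⁻¹ : (ZMod p)ˣ) : ZMod p) * g.left.toAdd
      = x.right⁻¹ • g.left.toAdd := rfl
  refine SemidirectProduct.ext ?_ ?_
  · show (x⁻¹ * g * x).left = _
    rw [SemidirectProduct.mul_left, SemidirectProduct.mul_left, SemidirectProduct.inv_left,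
      SemidirectProduct.mul_right, SemidirectProduct.inv_right, hg, mul_one,
      SemidirectProduct.left_inl]
    have : (mulAction p x.right⁻¹) x.left⁻¹ * (mulAction p x.right⁻¹) g.left *
        (mulAction p x.right⁻¹) x.left = (mulAction p x.right⁻¹) g.left := by
      rw [mul_comm ((mulAction p x.right⁻¹) x.left⁻¹) _, mul_assoc, ← map_mul, inv_mul_cancel,
        map_one, mul_one]
    rw [this]
    rw [hsmul]
    rfl
  · show (x⁻¹ * g * x).right = _
    rw [SemidirectProduct.mul_right, SemidirectProduct.mul_right, SemidirectProduct.inv_right,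
      hg, mul_one, inv_mul_cancel, SemidirectProduct.right_inl]

lemma mem_Zp_iff {Zp : Subgroup (Gp p)}
    (hZp : Zp = (SemidirectProduct.inl : Multiplicative (ZMod p) →* Gp p).range)
    (g : Gp p) : g ∈ Zp ↔ g.right = 1 := by
  rw [hZp, SemidirectProduct.range_inl_eq_ker_rightHom, MonoidHom.mem_ker]
  rfl

lemma conj_mem_Zp_iff {Zp : Subgroup (Gp p)}
    (hZp : Zp = (SemidirectProduct.inl : Multiplicative (ZMod p) →* Gp p).range)
    (g x : Gp p) : x⁻¹ * g * x ∈ Zp ↔ g.right = 1 := by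
  rw [mem_Zp_iff hZp]
  show x.right⁻¹ * g.right * x.right = 1 ↔ g.right = 1
  rw [mul_comm (x.right⁻¹) _, mul_assoc, inv_mul_cancel, mul_one]

lemma card_Gp : Nat.card (Gp p) = p * (p - 1) := by
  rw [← Nat.card_congr (prodEquiv p), Nat.card_prod]
  haveI : NeZero p := ⟨(Fact.out : p.Prime).ne_zero⟩
  rw [Nat.card_eq_fintype_card, Nat.card_eq_fintype_card, Fintype.card_multiplicative, ZMod.card,
    ZMod.card_units_eq_totient, Nat.totient_prime (Fact.out : p.Prime)]

lemma card_Zp {Zp : Subgroup (Gp p)}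
    (hZp : Zp = (SemidirectProduct.inl : Multiplicative (ZMod p) →* Gp p).range) :
    Nat.card Zp = p := by
  rw [hZp]
  rw [← Nat.card_congr (MonoidHom.ofInjective SemidirectProduct.inl_injective).toEquiv]
  haveI : NeZero p := ⟨(Fact.out : p.Prime).ne_zero⟩
  rw [Nat.card_eq_fintype_card, Fintype.card_multiplicative, ZMod.card]

end AuxGp

/-- The character of `G` induced from the trivial character of the normal
subgroup `Z_p` equals the sum of the `p − 1` linear irreducible characters of `G`
(which are the pullbacks along the canonical projection `G → H` of the irreducible
characters of `H = (ZMod p)ˣ`); and for every nontrivial irreducible character `η` of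
`Z_p ≅ ZMod p`, the induced character `Ind_{Z_p}^G η` equals `ψ_r`, the unique
irreducible character of `G` of degree `p − 1` (in particular it is irreducible). -/

theorem statement3 (p : ℕ) [Fact p.Prime] (hp2 : p ≠ 2)
    (Zp : Subgroup (Gp p))
    (hZp : Zp = (SemidirectProduct.inl : Multiplicative (ZMod p) →* Gp p).range) :
    (∀ S : Finset ((ZMod p)ˣ → ℂ), (∀ θ, θ ∈ S ↔ IsIrrChar ((ZMod p)ˣ) θ) →
      indSub Zp (fun _ => 1) =
        fun g => ∑ θ ∈ S, θ (SemidirectProduct.rightHom g)) ∧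
    (∀ η : Multiplicative (ZMod p) → ℂ, IsIrrChar (Multiplicative (ZMod p)) η →
      η ≠ (fun _ => 1) →
      ∀ ψr : Gp p → ℂ, IsIrrChar (Gp p) ψr → ψr 1 = (p : ℂ) - 1 →
        indSub Zp (fun g => η g.left) = ψr) := by
  have hp : p.Prime := Fact.out
  haveI : NeZero p := ⟨hp.ne_zero⟩
  have hpC : (p : ℂ) ≠ 0 := Nat.cast_ne_zero.mpr hp.ne_zero
  have hpm1 : ((p - 1 : ℕ) : ℂ) = (p : ℂ) - 1 := by
    push_cast [Nat.cast_sub hp.one_le]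
    ring
  have hpm1ne' : ((p : ℂ) - 1) ≠ 0 := by
    intro h
    have : (p : ℂ) = 1 := by linear_combination h
    exact hp.ne_one (by exact_mod_cast this)
  have hpm1ne : ((p - 1 : ℕ) : ℂ) ≠ 0 := by
    rw [hpm1]
    intro h
    have : (p : ℂ) = 1 := by linear_combination h
    exact hp.ne_one (by exact_mod_cast this)
  have hcardH : Fintype.card (ZMod p)ˣ = p - 1 := by
    rw [ZMod.card_units_eq_totient, Nat.totient_prime hp]
  have hcardN : Fintype.card (Multiplicative (ZMod p)) = p := by
    rw [Fintype.card_multiplicative, ZMod.card]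
  haveI : NeZero (Nat.card (ZMod p)ˣ) := ⟨Nat.card_pos.ne'⟩
  let eH : ((ZMod p)ˣ →* ℂˣ) ≃* (ZMod p)ˣ :=
    (IsCyclic.monoidHom_equiv_self (ZMod p)ˣ ℂ).some
  haveI : Fintype ((ZMod p)ˣ →* ℂˣ) := Fintype.ofEquiv _ eH.symm.toEquiv
  have hcardHom : Fintype.card ((ZMod p)ˣ →* ℂˣ) = Fintype.card (ZMod p)ˣ :=
    Fintype.card_congr eH.toEquiv
  constructor
  · -- Part 1
    intro S hS
    funext g
    show (Nat.card Zp : ℂ)⁻¹ * ∑ x : Gp p, (if x⁻¹ * g * x ∈ Zp then (1 : ℂ) else 0)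
        = ∑ θ ∈ S, θ (SemidirectProduct.rightHom g)
    rw [card_Zp hZp, sum_irrChars hcardHom S hS]
    by_cases hg : g.right = 1
    · rw [Finset.sum_congr rfl
        (fun x _ => if_pos ((conj_mem_Zp_iff hZp g x).mpr hg)), Finset.sum_const,
        Finset.card_univ, ← Nat.card_eq_fintype_card, card_Gp,
        if_pos (show SemidirectProduct.rightHom g = 1 from hg), hcardH]
      rw [nsmul_eq_mul, mul_one]
      push_cast [Nat.cast_sub hp.one_le]
      field_simp
    · rw [Finset.sum_congr rfl
        (fun x _ => if_neg (fun hc => hg ((conj_mem_Zp_iff hZp g x).mp hc))), Finset.sum_const,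
        if_neg (show ¬ SemidirectProduct.rightHom g = 1 from hg)]
      simp
  · -- Part 2
    intro η hη hη1 ψr hψr hψr1
    obtain ⟨f, rfl⟩ := hom_of_isIrrChar hη
    obtain ⟨V, hV, rfl⟩ := hψr
    haveI := hV
    have hchar1 : V.character 1 = (p : ℂ) - 1 := hψr1
    -- the sum of a nontrivial character of ZMod p vanishes
    obtain ⟨s, hs⟩ : ∃ s : Multiplicative (ZMod p), f s ≠ 1 := by
      by_contra h
      push_neg at h
      exact hη1 (funext fun z => h z)
    have hfsum : ∑ z : Multiplicative (ZMod p), f z = 0 := by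
      have key : ∑ z : Multiplicative (ZMod p), (f s * f z) = ∑ z : Multiplicative (ZMod p), f z :=
        Fintype.sum_bijective (fun z => s * z) (Group.mulLeft_bijective s)
          (fun z => f s * f z) (fun z => f z) (fun z => by
            show f s * f z = f (s * z)
            rw [← map_mul])
      have h2 : (f s - 1) * ∑ z : Multiplicative (ZMod p), f z = 0 := by
        rw [sub_mul, one_mul, Finset.mul_sum, key, sub_self]
      rcases mul_eq_zero.mp h2 with h3 | h3
      · exact absurd (by linear_combination h3) hs
      · exact h3
    -- conjugacy invariance facts
    have hA : ∀ z : Multiplicative (ZMod p), z ≠ 1 →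
        V.character (SemidirectProduct.inl z)
          = V.character (SemidirectProduct.inl (Multiplicative.ofAdd 1)) := by
      intro z hz
      have hz0 : z.toAdd ≠ 0 := fun h => hz (by
        have := congrArg Multiplicative.ofAdd h
        simpa using this)
      set v : (ZMod p)ˣ := Units.mk0 z.toAdd hz0 with hv
      have h1 : (mulAction p) v (Multiplicative.ofAdd 1) = z := by
        show Multiplicative.ofAdd ((v : ZMod p) * (Multiplicative.ofAdd (1 : ZMod p)).toAdd) = z
        rw [toAdd_ofAdd, mul_one]
        show Multiplicative.ofAdd z.toAdd = z
        simp
      rw [← h1, SemidirectProduct.inl_aut, map_inv, FDRep.char_conj]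
    have hB : ∀ u : (ZMod p)ˣ, u ≠ 1 → ∀ z z' : Multiplicative (ZMod p),
        V.character ⟨z, u⟩ = V.character ⟨z', u⟩ := by
      intro u hu z z'
      have hu0 : (1 : ZMod p) - (u : ZMod p) ≠ 0 := by
        intro h
        apply hu
        have : (u : ZMod p) = 1 := by linear_combination -h
        exact Units.ext (by simpa using this)
      set w : ZMod p := (z'.toAdd - z.toAdd) / (1 - (u : ZMod p)) with hw
      have hww : (1 - (u : ZMod p)) * w = z'.toAdd - z.toAdd := by
        rw [hw, mul_div_cancel₀ _ hu0]
      have hact : ∀ x : Multiplicative (ZMod p),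
          (mulAction p) u x = Multiplicative.ofAdd ((u : ZMod p) * x.toAdd) := fun x => rfl
      have hcal : SemidirectProduct.inl (Multiplicative.ofAdd w) * (⟨z, u⟩ : Gp p) *
          (SemidirectProduct.inl (Multiplicative.ofAdd w))⁻¹ = (⟨z', u⟩ : Gp p) := by
        refine SemidirectProduct.ext ?_ ?_
        · simp only [SemidirectProduct.mul_left, SemidirectProduct.mul_right,
            SemidirectProduct.inv_left, SemidirectProduct.inv_right, SemidirectProduct.left_inl,
            SemidirectProduct.right_inl, map_one, MulAut.one_apply, one_mul, mul_one, inv_one]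
          rw [hact]
          apply Multiplicative.toAdd.injective
          simp only [toAdd_mul, toAdd_ofAdd, toAdd_inv]
          linear_combination hww
        · simp only [SemidirectProduct.mul_right, SemidirectProduct.inv_right,
            SemidirectProduct.right_inl, one_mul, mul_one, inv_one]
      rw [← hcal, FDRep.char_conj]
    -- orthogonality with the linear characters
    haveI : Invertible ((Nat.card (Gp p)) : ℂ) :=
      invertibleOfNonzero (by exact_mod_cast Nat.card_pos.ne')
    have hVW : ∀ t : (ZMod p)ˣ →* ℂˣ,
        ∑ x : Gp p, V.character x * ((t x.right⁻¹ : ℂˣ) : ℂ) = 0 := by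
      intro t
      set ft : Gp p →* ℂ := ((Units.coeHom ℂ).comp t).comp (SemidirectProduct.rightHom) with hft
      haveI := simple_homFDRep ft
      have hne : ¬ Nonempty (V ≅ homFDRep ft) := by
        rintro ⟨i⟩
        have hci := FDRep.char_iso i
        have h1 : V.character 1 = (homFDRep ft).character 1 := by rw [hci]
        rw [hchar1, char_homFDRep, map_one] at h1
        have h2 : (p : ℂ) = 2 := by linear_combination h1
        exact hp2 (by exact_mod_cast h2)
      have horth := FDRep.char_orthonormal (k := ℂ) (G := Gp p) V (homFDRep ft)
      rw [if_neg hne] at horth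
      have hinv0 : ((Nat.card (Gp p) : ℂ))⁻¹ ≠ 0 :=
        inv_ne_zero (by exact_mod_cast Nat.card_pos.ne')
      have h0 : ∑ x : Gp p, V.character x * (homFDRep ft).character x⁻¹ = 0 :=
        (mul_eq_zero.mp horth).resolve_left hinv0
      have h0' : ∑ x : Gp p, V.character x * (homFDRep ft).character x⁻¹ = 0 := h0
      rw [← h0']
      refine Finset.sum_congr rfl (fun x _ => ?_)
      rw [char_homFDRep]
      rfl
    set F : (ZMod p)ˣ → ℂ := fun u => ∑ z : Multiplicative (ZMod p), V.character ⟨z, u⟩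
      with hFdef
    have hFt : ∀ t : (ZMod p)ˣ →* ℂˣ, ∑ u : (ZMod p)ˣ, F u * ((t u⁻¹ : ℂˣ) : ℂ) = 0 := by
      intro t
      rw [← hVW t, ← Equiv.sum_comp (prodEquiv p)
        (fun x : Gp p => V.character x * ((t x.right⁻¹ : ℂˣ) : ℂ)), Fintype.sum_prod_type,
        Finset.sum_comm]
      refine Finset.sum_congr rfl (fun u _ => ?_)
      rw [show F u = ∑ z : Multiplicative (ZMod p), V.character ⟨z, u⟩ from rfl, Finset.sum_mul]
      exact Finset.sum_congr rfl (fun z _ => rfl)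
    have hF0 : ∀ v : (ZMod p)ˣ, F v = 0 := by
      intro v
      have hswap : ∑ u : (ZMod p)ˣ,
          F u * (∑ t : (ZMod p)ˣ →* ℂˣ, ((t (v * u⁻¹) : ℂˣ) : ℂ)) = 0 := by
        calc ∑ u : (ZMod p)ˣ, F u * (∑ t : (ZMod p)ˣ →* ℂˣ, ((t (v * u⁻¹) : ℂˣ) : ℂ))
            = ∑ u : (ZMod p)ˣ, ∑ t : (ZMod p)ˣ →* ℂˣ, F u * ((t (v * u⁻¹) : ℂˣ) : ℂ) :=
              Finset.sum_congr rfl (fun u _ => Finset.mul_sum _ _ _)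
          _ = ∑ t : (ZMod p)ˣ →* ℂˣ, ∑ u : (ZMod p)ˣ, F u * ((t (v * u⁻¹) : ℂˣ) : ℂ) :=
              Finset.sum_comm
          _ = ∑ t : (ZMod p)ˣ →* ℂˣ,
              ((t v : ℂˣ) : ℂ) * ∑ u : (ZMod p)ˣ, F u * ((t u⁻¹ : ℂˣ) : ℂ) := by
              refine Finset.sum_congr rfl (fun t _ => ?_)
              rw [Finset.mul_sum]
              refine Finset.sum_congr rfl (fun u _ => ?_)
              rw [map_mul, Units.val_mul]
              ring
          _ = 0 := Finset.sum_eq_zero (fun t _ => by rw [hFt t, mul_zero])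
      have hin : ∀ u : (ZMod p)ˣ, (∑ t : (ZMod p)ˣ →* ℂˣ, ((t (v * u⁻¹) : ℂˣ) : ℂ))
          = if u = v then ((Fintype.card ((ZMod p)ˣ →* ℂˣ)) : ℂ) else 0 := by
        intro u
        rw [sum_homs]
        by_cases h : u = v
        · rw [if_pos (by rw [h, mul_inv_cancel]), if_pos h]
        · rw [if_neg (fun hh => h (mul_inv_eq_one.mp hh).symm), if_neg h]
      rw [Finset.sum_congr rfl (fun u _ => by rw [hin u])] at hswap
      have hone : ∑ u : (ZMod p)ˣ,
          F u * (if u = v then ((Fintype.card ((ZMod p)ˣ →* ℂˣ)) : ℂ) else 0)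
          = F v * ((Fintype.card ((ZMod p)ˣ →* ℂˣ)) : ℂ) := by
        calc ∑ u : (ZMod p)ˣ,
            F u * (if u = v then ((Fintype.card ((ZMod p)ˣ →* ℂˣ)) : ℂ) else 0)
            = ∑ u : (ZMod p)ˣ,
              (if u = v then F u * ((Fintype.card ((ZMod p)ˣ →* ℂˣ)) : ℂ) else 0) :=
              Finset.sum_congr rfl (fun u _ => by split_ifs <;> simp)
          _ = F v * ((Fintype.card ((ZMod p)ˣ →* ℂˣ)) : ℂ) := by
              rw [Finset.sum_ite_eq' Finset.univ v
                (fun u => F u * ((Fintype.card ((ZMod p)ˣ →* ℂˣ)) : ℂ))]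
              simp
      rw [hone] at hswap
      rcases mul_eq_zero.mp hswap with h3 | h3
      · exact h3
      · exfalso
        apply hpm1ne
        rw [← hcardH, ← hcardHom]
        exact h3
    -- values of the character
    have hu_ne : ∀ u : (ZMod p)ˣ, u ≠ 1 → ∀ z : Multiplicative (ZMod p),
        V.character ⟨z, u⟩ = 0 := by
      intro u hu z
      have h2 : F u = (p : ℂ) * V.character ⟨z, u⟩ := by
        rw [show F u = ∑ z' : Multiplicative (ZMod p), V.character ⟨z', u⟩ from rfl,
          Finset.sum_congr rfl (fun z' _ => hB u hu z' z), Finset.sum_const, Finset.card_univ,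
          hcardN, nsmul_eq_mul]
      rw [hF0 u] at h2
      rcases mul_eq_zero.mp h2.symm with h3 | h3
      · exact absurd h3 hpC
      · exact h3
    have hAm1 : V.character (SemidirectProduct.inl (Multiplicative.ofAdd 1)) = -1 := by
      have hFone : (0 : ℂ) = ((p : ℂ) - 1) + ((p : ℂ) - 1) *
          V.character (SemidirectProduct.inl (Multiplicative.ofAdd 1)) := by
        rw [← hF0 1, show F 1 = ∑ z : Multiplicative (ZMod p), V.character ⟨z, 1⟩ from rfl]
        calc ∑ z : Multiplicative (ZMod p), V.character ⟨z, 1⟩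
            = V.character ⟨1, 1⟩ + ∑ z ∈ Finset.univ.erase (1 : Multiplicative (ZMod p)),
              V.character ⟨z, 1⟩ :=
              (Finset.add_sum_erase _ _ (Finset.mem_univ _)).symm
          _ = ((p : ℂ) - 1) + ((p : ℂ) - 1) *
              V.character (SemidirectProduct.inl (Multiplicative.ofAdd 1)) := by
              have e1 : V.character (⟨1, 1⟩ : Gp p) = (p : ℂ) - 1 := hchar1
              have e2 : ∑ z ∈ Finset.univ.erase (1 : Multiplicative (ZMod p)),
                  V.character ⟨z, 1⟩ = ((p : ℂ) - 1) *
                    V.character (SemidirectProduct.inl (Multiplicative.ofAdd 1)) := by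
                rw [Finset.sum_congr rfl (fun z hz =>
                  show V.character ⟨z, 1⟩ =
                    V.character (SemidirectProduct.inl (Multiplicative.ofAdd 1)) from
                    hA z (Finset.ne_of_mem_erase hz)),
                  Finset.sum_const, Finset.card_erase_of_mem (Finset.mem_univ _),
                  Finset.card_univ, hcardN, nsmul_eq_mul, hpm1]
              rw [e1, e2]
      have h1 : ((p : ℂ) - 1) *
          (1 + V.character (SemidirectProduct.inl (Multiplicative.ofAdd 1))) = 0 := by
        linear_combination -hFone
      rcases mul_eq_zero.mp h1 with h2 | h2
      · exact absurd h2 hpm1ne'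
      · linear_combination h2
    -- the sum over the group, split as a product
    have hsum_split : ∀ c : ZMod p,
        (∑ x : Gp p, f (Multiplicative.ofAdd (((x.right⁻¹ : (ZMod p)ˣ) : ZMod p) * c)))
          = (p : ℂ) * ∑ u : (ZMod p)ˣ,
              f (Multiplicative.ofAdd (((u⁻¹ : (ZMod p)ˣ) : ZMod p) * c)) := by
      intro c
      rw [← Equiv.sum_comp (prodEquiv p)
        (fun x : Gp p => f (Multiplicative.ofAdd (((x.right⁻¹ : (ZMod p)ˣ) : ZMod p) * c))),
        Fintype.sum_prod_type]
      rw [Finset.sum_congr rfl (fun z (_ : z ∈ (Finset.univ : Finset (Multiplicative (ZMod p)))) =>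
        show (∑ u : (ZMod p)ˣ, f (Multiplicative.ofAdd
            ((((prodEquiv p (z, u)).right⁻¹ : (ZMod p)ˣ) : ZMod p) * c)))
          = ∑ u : (ZMod p)ˣ, f (Multiplicative.ofAdd (((u⁻¹ : (ZMod p)ˣ) : ZMod p) * c)) from
          Finset.sum_congr rfl (fun u _ => rfl)),
        Finset.sum_const, Finset.card_univ, hcardN, nsmul_eq_mul]
    -- final computation
    funext g
    show (Nat.card Zp : ℂ)⁻¹ *
        ∑ x : Gp p, (if x⁻¹ * g * x ∈ Zp then f ((x⁻¹ * g * x).left) else 0) = V.character g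
    rw [card_Zp hZp]
    by_cases hg : g.right = 1
    · have hterm : ∀ x : Gp p, (if x⁻¹ * g * x ∈ Zp then f ((x⁻¹ * g * x).left) else 0)
          = f (Multiplicative.ofAdd (((x.right⁻¹ : (ZMod p)ˣ) : ZMod p) * g.left.toAdd)) := by
        intro x
        rw [if_pos ((conj_mem_Zp_iff hZp g x).mpr hg), conj_calc x g hg,
          SemidirectProduct.left_inl]
      rw [Finset.sum_congr rfl (fun x _ => hterm x), hsum_split g.left.toAdd]
      by_cases hz1 : g.left = 1
      · have hg1 : g = 1 := by
          refine SemidirectProduct.ext ?_ ?_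
          · exact hz1
          · exact hg
        have hz0 : g.left.toAdd = 0 := by rw [hz1]; rfl
        rw [hz0]
        rw [Finset.sum_congr rfl (fun u (_ : u ∈ (Finset.univ : Finset (ZMod p)ˣ)) => by
          rw [mul_zero, ofAdd_zero, map_one])]
        rw [Finset.sum_const, Finset.card_univ, hcardH, nsmul_eq_mul, mul_one, hg1, hchar1]
        rw [Nat.cast_sub hp.one_le]
        push_cast
        field_simp
      · have hz0 : g.left.toAdd ≠ 0 := fun h => hz1 (by
          have := congrArg Multiplicative.ofAdd h
          simpa using this)
        have hT : ∑ u : (ZMod p)ˣ,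
            f (Multiplicative.ofAdd (((u⁻¹ : (ZMod p)ˣ) : ZMod p) * g.left.toAdd)) = -1 := by
          set z₀ : (ZMod p)ˣ := Units.mk0 g.left.toAdd hz0 with hz₀
          have h1 : ∑ u : (ZMod p)ˣ,
              f (Multiplicative.ofAdd (((u⁻¹ : (ZMod p)ˣ) : ZMod p) * g.left.toAdd))
              = ∑ w : (ZMod p)ˣ, f (Multiplicative.ofAdd ((w : ZMod p))) := by
            rw [← Equiv.sum_comp ((Equiv.inv (ZMod p)ˣ).trans (Equiv.mulRight z₀))
              (fun w : (ZMod p)ˣ => f (Multiplicative.ofAdd ((w : ZMod p))))]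
            exact Finset.sum_congr rfl (fun u _ => rfl)
          rw [h1]
          have h2 : ∑ t : ZMod p, f (Multiplicative.ofAdd t) = 0 := by
            rw [show (∑ t : ZMod p, f (Multiplicative.ofAdd t))
              = ∑ z : Multiplicative (ZMod p), f z from
                Equiv.sum_comp (Multiplicative.ofAdd) (⇑f)]
            exact hfsum
          have h3 : ∑ t : ZMod p, f (Multiplicative.ofAdd t)
              = f (Multiplicative.ofAdd 0)
                + ∑ t ∈ Finset.univ.erase (0 : ZMod p), f (Multiplicative.ofAdd t) :=
            (Finset.add_sum_erase _ _ (Finset.mem_univ _)).symm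
          have h4 : ∑ w : (ZMod p)ˣ, f (Multiplicative.ofAdd ((w : ZMod p)))
              = ∑ t ∈ Finset.univ.erase (0 : ZMod p), f (Multiplicative.ofAdd t) := by
            rw [Finset.sum_subtype (p := fun t : ZMod p => t ≠ 0) (Finset.univ.erase (0 : ZMod p))
              (fun t => by simp) (fun t => f (Multiplicative.ofAdd t))]
            refine Eq.trans ?_ (Equiv.sum_comp unitsEquivNeZero
              (fun a : {t : ZMod p // t ≠ 0} => f (Multiplicative.ofAdd (a : ZMod p))))
            exact Finset.sum_congr rfl (fun w _ => rfl)
          rw [h4]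
          have h5 : f (Multiplicative.ofAdd (0 : ZMod p)) = 1 := by
            rw [ofAdd_zero, map_one]
          rw [h2, h5] at h3
          linear_combination -h3
        rw [hT]
        have hgi : g = SemidirectProduct.inl g.left := by
          refine SemidirectProduct.ext ?_ ?_
          · rfl
          · exact hg
        rw [hgi, hA g.left hz1, hAm1]
        field_simp
    · rw [Finset.sum_congr rfl
        (fun x _ => if_neg (fun hc => hg ((conj_mem_Zp_iff hZp g x).mp hc))), Finset.sum_const,
        smul_zero, mul_zero]
      exact (hu_ne g.right hg g.left).symm
end BrGrFormal
end
end

section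
/- The restriction of ψ_r to the complement H = (ZMod p)ˣ of Z_p in G equals the sum of all irreducible characters of H: Res^G_H(ψ_r) = Σ_{θ ∈ Irr(H)} θ. Equivalently, (Res^G_H ψ_r)(h) = p−1 if h = 1 and 0 otherwise. -/
open scoped Classical

noncomputable section

namespace BrGrFormal

/-! ### Auxiliary lemmas -/


lemma mulAction_apply {p : ℕ} (u : (ZMod p)ˣ) (m : Multiplicative (ZMod p)) :
    (mulAction p u) m = Multiplicative.ofAdd (u • m.toAdd) := rfl

/-- One-dimensional representation attached to `χ : G →* ℂˣ`. -/
def lineRep {G : Type} [Group G] (χ : G →* ℂˣ) : Representation ℂ G ℂ where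
  toFun g := (χ g : ℂ) • (1 : ℂ →ₗ[ℂ] ℂ)
  map_one' := by simp
  map_mul' g h := by simp only [map_mul, Units.val_mul, smul_mul_smul_comm, mul_one]

lemma char_lineRep {G : Type} [Group G] (χ : G →* ℂˣ) (g : G) :
    (FDRep.of (lineRep χ)).character g = (χ g : ℂ) := by
  show LinearMap.trace ℂ ℂ ((χ g : ℂ) • (1 : ℂ →ₗ[ℂ] ℂ)) = (χ g : ℂ)
  rw [map_smul, LinearMap.trace_one]
  simp

lemma linear_inj {M : Type*} [AddCommGroup M] [Module ℂ M] (g : ℂ →ₗ[ℂ] M) (hg : g ≠ 0) :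
    Function.Injective g := by
  have h1 : g 1 ≠ 0 := by
    intro h1
    apply hg
    apply LinearMap.ext_ring
    simpa using h1
  intro a b hab
  have h2 : (a - b) • g 1 = 0 := by
    rw [← map_smul, smul_eq_mul, mul_one, map_sub, hab, sub_self]
  exact sub_eq_zero.mp ((smul_eq_zero.mp h2).resolve_right h1)

open FDRep in
/-- Orthogonality of the character of a simple non-one-dimensional representation with any
one-dimensional character. -/
lemma ortho_line {G : Type} [Group G] [Fintype G] (V : FDRep ℂ G) (hV : CategoryTheory.Simple V)
    (hne : V.character 1 ≠ 1) (χ : G →* ℂˣ) :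
    ∑ g : G, V.character g * ((χ g)⁻¹ : ℂˣ) = 0 := by
  haveI := hV
  haveI : Invertible (Fintype.card G : ℂ) :=
    invertibleOfNonzero (by exact_mod_cast Fintype.card_ne_zero)
  set W := FDRep.of (lineRep χ) with hW
  have hzero : ∀ f : (W ⟶ V), f = 0 := by
    intro f
    by_contra hf
    have hfhom : (f.hom.hom.hom : ℂ →ₗ[ℂ] V) ≠ 0 := fun h =>
      hf (Action.Hom.ext (FGModuleCat.hom_ext (by exact h)))
    have hinj : Function.Injective f.hom.hom.hom := linear_inj (f.hom.hom.hom : ℂ →ₗ[ℂ] V) hfhom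
    haveI : CategoryTheory.Mono f := by
      apply CategoryTheory.ConcreteCategory.mono_of_injective
      exact hinj
    haveI : CategoryTheory.IsIso f := (CategoryTheory.Simple.mono_isIso_iff_nonzero f).mpr hf
    have hiso : W ≅ V := CategoryTheory.asIso f
    have := FDRep.char_iso hiso
    apply hne
    rw [← this, hW, char_lineRep, map_one, Units.val_one]
  have hsub : Subsingleton (W ⟶ V) := ⟨fun a b => by rw [hzero a, hzero b]⟩
  have hfr : Module.finrank ℂ (W ⟶ V) = 0 := Module.finrank_zero_of_subsingleton
  have e1 : ∀ g : G, V.character g * ((χ g)⁻¹ : ℂˣ) =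
      (FDRep.of (Representation.linHom W.ρ V.ρ)).character g := by
    intro g
    rw [FDRep.char_linHom, hW, char_lineRep, map_inv]
    ring
  have h0 : ⅟(Fintype.card G : ℂ) •
      ∑ g : G, (FDRep.of (Representation.linHom W.ρ V.ρ)).character g = 0 := by
    rw [invOf_eq_inv, smul_eq_mul, ← Nat.card_eq_fintype_card,
      FDRep.average_char_eq_finrank_invariants]
    rw [show (FDRep.of (Representation.linHom W.ρ V.ρ)).ρ = Representation.linHom W.ρ V.ρ from
      FDRep.of_ρ' _]
    erw [(Representation.linHom.invariantsEquivFDRepHom (k := ℂ) (G := G) W V).finrank_eq]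
    rw [hfr, Nat.cast_zero]
  have h1 : ∑ g : G, (FDRep.of (Representation.linHom W.ρ V.ρ)).character g = 0 := by
    have h2 := congrArg (fun x => (Fintype.card G : ℂ) • x) h0
    simpa [smul_smul, mul_invOf_self] using h2
  rw [Finset.sum_congr rfl fun g _ => e1 g, h1]

/-- Fourier inversion: if all character sums of `c` vanish then `c = 0`. -/
lemma fourier_vanish {H : Type} [CommGroup H] [Fintype H] (c : H → ℂ)
    (hc : ∀ θ : H →* ℂˣ, ∑ h : H, c h * ((θ h)⁻¹ : ℂˣ) = 0) (h0 : H) :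
    c h0 = 0 := by
  haveI : NeZero ((Monoid.exponent H : ℂ)) :=
    ⟨by exact_mod_cast Monoid.exponent_ne_zero_of_finite⟩
  obtain ⟨E⟩ := CommGroup.monoidHom_mulEquiv_of_hasEnoughRootsOfUnity H ℂ
  haveI : Finite (H →* ℂˣ) := Finite.of_equiv H E.symm.toEquiv
  letI : Fintype (H →* ℂˣ) := Fintype.ofFinite _
  have hT : ∀ y : H, y ≠ 1 → ∑ θ : H →* ℂˣ, ((θ y : ℂ)) = 0 := by
    intro y hy
    obtain ⟨φ, hφ⟩ := CommGroup.exists_apply_ne_one_of_hasEnoughRootsOfUnity H ℂ hy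
    have hbij : Function.Bijective (fun θ : H →* ℂˣ => φ * θ) :=
      (Equiv.mulLeft φ).bijective
    have hsum := Fintype.sum_bijective _ hbij (fun θ : H →* ℂˣ => (((φ * θ) y : ℂ)))
      (fun θ : H →* ℂˣ => ((θ y : ℂ))) (fun θ => rfl)
    simp only [MonoidHom.mul_apply, Units.val_mul] at hsum
    rw [← Finset.mul_sum] at hsum
    have hφ1 : (φ y : ℂ) ≠ 1 := fun h => hφ (Units.val_eq_one.mp h)
    have : ((φ y : ℂ) - 1) * ∑ θ : H →* ℂˣ, ((θ y : ℂ)) = 0 := by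
      rw [sub_mul, one_mul, hsum, sub_self]
    exact (mul_eq_zero.mp this).resolve_left (sub_ne_zero.mpr hφ1)
  have hT1 : ∑ θ : H →* ℂˣ, ((θ (1 : H) : ℂ)) = (Fintype.card H : ℂ) := by
    simp only [map_one, Units.val_one, Finset.sum_const, Finset.card_univ, nsmul_eq_mul, mul_one]
    rw [Fintype.card_congr E.toEquiv]
  have lhs0 : ∑ θ : H →* ℂˣ, ∑ h : H, (θ h0 : ℂ) * (c h * ((θ h)⁻¹ : ℂˣ)) = 0 :=
    Finset.sum_eq_zero fun θ _ => by rw [← Finset.mul_sum, hc θ, mul_zero]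
  have swap : ∑ θ : H →* ℂˣ, ∑ h : H, (θ h0 : ℂ) * (c h * ((θ h)⁻¹ : ℂˣ)) =
      ∑ h : H, c h * ∑ θ : H →* ℂˣ, ((θ (h0 * h⁻¹) : ℂ)) := by
    rw [Finset.sum_comm]
    refine Finset.sum_congr rfl fun h _ => ?_
    rw [Finset.mul_sum]
    refine Finset.sum_congr rfl fun θ _ => ?_
    have : ((θ (h0 * h⁻¹) : ℂ)) = (θ h0 : ℂ) * (((θ h)⁻¹ : ℂˣ) : ℂ) := by
      rw [map_mul, map_inv, Units.val_mul]
    rw [this]; ring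
  have rhs : ∑ h : H, c h * ∑ θ : H →* ℂˣ, ((θ (h0 * h⁻¹) : ℂ)) =
      c h0 * (Fintype.card H : ℂ) := by
    rw [Finset.sum_eq_single h0]
    · rw [mul_inv_cancel, hT1]
    · intro h _ hne
      rw [hT _ (by simpa [mul_inv_eq_one] using (Ne.symm hne)), mul_zero]
    · intro habs; exact absurd (Finset.mem_univ h0) habs
  have hcard : (Fintype.card H : ℂ) ≠ 0 := by exact_mod_cast Fintype.card_ne_zero
  have : c h0 * (Fintype.card H : ℂ) = 0 := by rw [← rhs, ← swap, lhs0]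
  exact (mul_eq_zero.mp this).resolve_right hcard

/-- The restriction of `ψ_r` to the complement `H = (ZMod p)ˣ` of `Z_p` in
`G` equals the sum of all irreducible characters of `H`; equivalently,
`(Res^G_H ψ_r) h = p − 1` if `h = 1` and `0` otherwise. -/
theorem statement4 (p : ℕ) [Fact p.Prime] (hp2 : p ≠ 2) (ψr : Gp p → ℂ)
    (h1 : IsIrrChar (Gp p) ψr) (h2 : ψr 1 = (p : ℂ) - 1) :
    ∀ h : (ZMod p)ˣ,
      ψr (SemidirectProduct.inr h) = if h = 1 then (p : ℂ) - 1 else 0 := by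
  intro h
  obtain ⟨V, hV, hψ⟩ := h1
  have hp : p.Prime := Fact.out
  have hpC : (p : ℂ) ≠ 0 := by exact_mod_cast hp.ne_zero
  -- conjugation invariance of ψr
  have hconj : ∀ x g : Gp p, ψr (x * g * x⁻¹) = ψr g := by
    intro x g
    rw [hψ]
    exact FDRep.char_conj V g x
  -- elements ⟨z, u⟩ with u ≠ 1 are conjugate to inr u
  have hB : ∀ u : (ZMod p)ˣ, u ≠ 1 → ∀ z : Multiplicative (ZMod p),
      ψr ⟨z, u⟩ = ψr (SemidirectProduct.inr u) := by
    intro u hu z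
    have hval : ((u : ZMod p)) ≠ 1 := by
      intro hh
      exact hu (Units.ext (by rw [hh, Units.val_one]))
    have hsub : (1 - (u : ZMod p)) ≠ 0 := sub_ne_zero.mpr (Ne.symm hval)
    set w : ZMod p := (1 - (u : ZMod p))⁻¹ * z.toAdd with hw
    have hkey : SemidirectProduct.inl (Multiplicative.ofAdd w) * SemidirectProduct.inr u *
        (SemidirectProduct.inl (Multiplicative.ofAdd w))⁻¹ = (⟨z, u⟩ : Gp p) := by
      ext
      · simp only [SemidirectProduct.mul_left, SemidirectProduct.mul_right,
          SemidirectProduct.inv_left, SemidirectProduct.inv_right, SemidirectProduct.left_inl,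
          SemidirectProduct.right_inl, SemidirectProduct.left_inr, SemidirectProduct.right_inr,
          mul_one, one_mul, map_one, inv_one, MulAut.one_apply, mulAction_apply, toAdd_inv,
          toAdd_ofAdd, one_smul, smul_neg, Units.smul_def, smul_eq_mul]
        have hzz : w + -((u : ZMod p) * w) = z.toAdd := by
          have h5 : (1 - (u : ZMod p)) * w = z.toAdd := by
            rw [hw, ← mul_assoc, mul_inv_cancel₀ hsub, one_mul]
          linear_combination h5
        rw [← ofAdd_add, hzz, ofAdd_toAdd]
      · simp
    rw [← hkey, hconj]
  -- orthogonality with one-dimensional characters of G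
  have hne : V.character 1 ≠ 1 := by
    have hch : V.character 1 = ψr 1 := by rw [hψ]
    rw [hch, h2]
    intro hc
    apply hp2
    have : (p : ℂ) = 2 := by linear_combination hc
    exact_mod_cast this
  -- the equiv between pairs and the semidirect product
  let e : ((ZMod p)ˣ × Multiplicative (ZMod p)) ≃ Gp p :=
    { toFun := fun x => ⟨x.2, x.1⟩
      invFun := fun g => (g.right, g.left)
      left_inv := fun _ => rfl
      right_inv := fun _ => rfl }
  -- the class-function data on H
  set c : (ZMod p)ˣ → ℂ := fun u =>
    if u = 1 then (∑ z : Multiplicative (ZMod p), ψr (SemidirectProduct.inl z)) / p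
    else ψr (SemidirectProduct.inr u) with hc
  have key : ∀ θ : (ZMod p)ˣ →* ℂˣ, ∑ u : (ZMod p)ˣ, c u * ((θ u)⁻¹ : ℂˣ) = 0 := by
    intro θ
    have S0 := ortho_line V hV hne (θ.comp (SemidirectProduct.rightHom))
    have S1 : ∑ x : ((ZMod p)ˣ × Multiplicative (ZMod p)),
        ψr ⟨x.2, x.1⟩ * ((θ x.1)⁻¹ : ℂˣ) = 0 := by
      rw [← S0]
      rw [← Equiv.sum_comp e (fun g => V.character g *
        (((θ.comp (SemidirectProduct.rightHom)) g)⁻¹ : ℂˣ))]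
      refine Finset.sum_congr rfl fun x _ => ?_
      rw [hψ]
      rfl
    rw [Fintype.sum_prod_type] at S1
    have S2 : ∀ u : (ZMod p)ˣ, ∑ z : Multiplicative (ZMod p),
        ψr ⟨z, u⟩ * ((θ u)⁻¹ : ℂˣ) = (p : ℂ) * (c u * ((θ u)⁻¹ : ℂˣ)) := by
      intro u
      by_cases hu : u = 1
      · subst hu
        simp only [hc, if_pos rfl]
        rw [← Finset.sum_mul]
        have : ∑ z : Multiplicative (ZMod p), ψr ⟨z, 1⟩ =
            ∑ z : Multiplicative (ZMod p), ψr (SemidirectProduct.inl z) :=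
          Finset.sum_congr rfl fun z _ => rfl
        rw [this]
        field_simp
      · simp only [hc, if_neg hu]
        rw [Finset.sum_congr rfl fun z _ => by rw [hB u hu z]]
        rw [Finset.sum_const, Finset.card_univ]
        have hcard : Fintype.card (Multiplicative (ZMod p)) = p := by
          rw [Fintype.card_multiplicative, ZMod.card]
        rw [hcard, nsmul_eq_mul]
    rw [Finset.sum_congr rfl fun u _ => S2 u, ← Finset.mul_sum] at S1
    exact (mul_eq_zero.mp S1).resolve_left hpC
  have hc0 := fourier_vanish c key h
  by_cases hone : h = 1
  · subst hone
    rw [if_pos rfl, map_one, h2]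
  · rw [if_neg hone]
    simpa [hc, hone] using hc0
end BrGrFormal
end
end

section
/- For every i ∈ I and every π ∈ Equiv.Perm (Fin k): Σ_{f : Fin k → H} ψ̃_r^k(f; π) · conj(θ̃_i^k(f; π)) = (p−1)^k. -/
open scoped Classical

noncomputable section

namespace BrGrFormal

/-! ### Wreath products -/

/-- The permutation action on the base group of a wreath product. -/
def permAut (N : Type) [Group N] (k : ℕ) : Equiv.Perm (Fin k) →* MulAut (Fin k → N) where
  toFun σ :=
    { toFun := fun f => f ∘ σ.symm
      invFun := fun f => f ∘ σ
      left_inv := fun f => by ext j; simp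
      right_inv := fun f => by ext j; simp
      map_mul' := fun f g => rfl }
  map_one' := by ext f j; rfl
  map_mul' := fun σ τ => by ext f j; rfl

/-- The wreath product `N ≀ S_k`. -/
abbrev Wr (N : Type) [Group N] (k : ℕ) := (Fin k → N) ⋊[permAut N k] Equiv.Perm (Fin k)

/-- The map between wreath products induced by a homomorphism of base groups. -/
def wrMap {N M : Type} [Group N] [Group M] (ν : N →* M) (k : ℕ) : Wr N k →* Wr M k where
  toFun g := ⟨fun j => ν (g.left j), g.right⟩
  map_one' := by ext j <;> simp [permAut]
  map_mul' := fun a b => by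
    ext j
    · exact map_mul ν (a.left j) (b.left (a.right.symm j))
    · rfl

/-- The set of minimal representatives of the orbits (cycles) of a permutation;
its cardinality is the number `c(π)` of orbits of `π`, fixed points included. -/
def orbitReps {k : ℕ} (π : Equiv.Perm (Fin k)) : Finset (Fin k) :=
  Finset.univ.filter fun x => ∀ y : Fin k, π.SameCycle x y → x ≤ y

/-- The orbit of `x` under (the cyclic group generated by) `π`, as a finset. -/
def orbitOf {k : ℕ} (π : Equiv.Perm (Fin k)) (x : Fin k) : Finset (Fin k) :=
  Finset.univ.filter fun y => π.SameCycle x y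

/-- The cycle product `f j * f (π⁻¹ j) * ⋯ * f (π^{-(m-1)} j)` of `(f ; π)` along the
orbit of `j`, where `m` is the cardinality of this orbit. -/
def cycleProd {N : Type} [Group N] {k : ℕ} (f : Fin k → N) (π : Equiv.Perm (Fin k))
    (j : Fin k) : N :=
  (((List.range (orbitOf π j).card)).map fun t => f ((π ^ t)⁻¹ j)).prod

/-- The class function `ψ̃^k` on `N ≀ S_k` attached to a class function `ψ` on `N`:
`(f ; π) ↦ ∏_{orbits O of π} ψ (cycle product of (f;π) along O)`. -/
def cycleCF {N : Type} [Group N] {k : ℕ} (ψ : N → ℂ) : Wr N k → ℂ :=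
  fun g => ∏ x ∈ orbitReps g.right, ψ (cycleProd g.left g.right x)

/-- The linear character `ψ̃^k : (f;π) ↦ ∏_j ψ (f j)` of `N ≀ S_k` attached to a linear
character `ψ` of `N`. -/
def prodCF {N : Type} [Group N] {k : ℕ} (ψ : N → ℂ) : Wr N k → ℂ :=
  fun g => ∏ j, ψ (g.left j)

/-- The linear character `θ̃^k : (f;π) ↦ θ (∏_j f j)` of `N ≀ S_k` attached to a linear
character `θ` of an abelian group `N`; it coincides with `prodCF θ`. -/
def thetaTilde {N : Type} [CommGroup N] {k : ℕ} (θ : N → ℂ) : Wr N k → ℂ :=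
  fun g => θ (∏ j, g.left j)

/-- The class function `(f;π) ↦ a (π)` on `N ≀ S_k` attached to a class function `a`
on `S_k` (denoted `φ_a`, resp. `ζ_a`, in the paper). -/
def permCF {N : Type} [Group N] {k : ℕ} (a : Equiv.Perm (Fin k) → ℂ) : Wr N k → ℂ :=
  fun g => a g.right


section RepLemmas
open CategoryTheory Module
variable {Γ : Type} [Group Γ]

-- morphism from commuting linear map
def morOf (V : FDRep ℂ Γ) (L : V →ₗ[ℂ] V) (h : ∀ g : Γ, L * V.ρ g = V.ρ g * L) : V ⟶ V :=
  ⟨ObjectProperty.homMk (ModuleCat.ofHom L), fun g => by ext v; exact congrFun (congrArg (fun (m : V →ₗ[ℂ] V) => m.toFun) (h g)) v⟩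

lemma morOf_hom (V : FDRep ℂ Γ) (L) (h) : (morOf V L h).hom.hom.hom = L := rfl

lemma smul_hom (V : FDRep ℂ Γ) (c : ℂ) : ((c • 𝟙 V : V ⟶ V)).hom.hom.hom = (c • LinearMap.id : V →ₗ[ℂ] V) := rfl

lemma schur_scalar (V : FDRep ℂ Γ) [Simple V] (φ : V ⟶ V) : ∃ c : ℂ, φ = c • 𝟙 V := by
  have h1 : finrank ℂ (V ⟶ V) = 1 := by
    rw [FDRep.finrank_hom_simple_simple]
    simp [Nonempty.intro (Iso.refl V)]
  have hid : (𝟙 V : V ⟶ V) ≠ 0 := id_nonzero V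
  rw [finrank_eq_one_iff_of_nonzero' (𝟙 V) hid] at h1
  obtain ⟨c, hc⟩ := h1 φ
  exact ⟨c, hc.symm⟩

lemma hom_eq_zero_iff (V : FDRep ℂ Γ) (φ : V ⟶ V) : φ = 0 ↔ φ.hom = 0 := by
  constructor
  · rintro rfl; rfl
  · intro h; apply Action.Hom.ext; exact h

lemma finrank_pos_of_simple (V : FDRep ℂ Γ) [Simple V] : 0 < finrank ℂ V := by
  by_contra h
  push_neg at h
  have h0 : finrank ℂ V = 0 := Nat.le_zero.mp h
  have : Subsingleton V := by
    rw [finrank_zero_iff] at h0; exact h0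
  have : (𝟙 V : V ⟶ V) = 0 := by
    rw [hom_eq_zero_iff]
    ext v
    exact this.elim _ _
  exact id_nonzero V this

instance cardInv [Fintype Γ] : Invertible ((Fintype.card Γ : ℂ)) :=
  invertibleOfNonzero (by exact_mod_cast Fintype.card_ne_zero)

lemma char_orthonormal' [Fintype Γ] (V : FDRep ℂ Γ) [Simple V] :
    ⅟ (Fintype.card Γ : ℂ) • ∑ g : Γ, V.character g * V.character g⁻¹ = 1 := by
  have := FDRep.char_orthonormal (k := ℂ) (G := Γ) V V
  rw [if_pos ⟨Iso.refl V⟩] at this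
  simpa [Nat.card_eq_fintype_card] using this

lemma ofMor_scalar (V : FDRep ℂ Γ) [Simple V] (L : V →ₗ[ℂ] V)
    (h : ∀ g : Γ, L * V.ρ g = V.ρ g * L) : ∃ c : ℂ, L = c • (1 : V →ₗ[ℂ] V) := by
  obtain ⟨c, hc⟩ := schur_scalar V (morOf V L h)
  refine ⟨c, ?_⟩
  have : L = (morOf V L h).hom.hom.hom := rfl
  rw [this, hc]
  rfl

lemma id_ne_zero' (V : FDRep ℂ Γ) [Simple V] : ((1 : V →ₗ[ℂ] V)) ≠ 0 := by
  intro h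
  have hpos := finrank_pos_of_simple V
  haveI hsub : Subsingleton V := ⟨fun a b => by
    have ha := DFunLike.congr_fun h a
    have hb := DFunLike.congr_fun h b
    simp [Module.End.one_eq_id] at ha hb
    rw [ha, hb]⟩
  rw [finrank_zero_of_subsingleton] at hpos
  exact lt_irrefl 0 hpos

lemma char_one_eq_one_of_comm [Fintype Γ] (V : FDRep ℂ Γ) [Simple V]
    (hcomm : ∀ g h : Γ, V.ρ g * V.ρ h = V.ρ h * V.ρ g) :
    finrank ℂ V = 1 := by
  have hscal : ∀ g : Γ, ∃ c : ℂ, V.ρ g = c • (1 : V →ₗ[ℂ] V) := fun g =>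
    ofMor_scalar V (V.ρ g) (fun h => hcomm g h)
  set d : ℂ := (finrank ℂ V : ℂ) with hd
  have hterm : ∀ g : Γ, V.character g * V.character g⁻¹ = d * d := by
    intro g
    obtain ⟨c, hc⟩ := hscal g
    obtain ⟨c', hc'⟩ := hscal g⁻¹
    have hcc' : c * c' = 1 := by
      have h1 : V.ρ g * V.ρ g⁻¹ = (1 : V →ₗ[ℂ] V) := by
        rw [← map_mul]; simp
      rw [hc, hc', smul_mul_assoc, mul_smul_comm, one_mul, smul_smul] at h1
      have := id_ne_zero' V
      nth_rewrite 2 [show (1 : V →ₗ[ℂ] V) = (1 : ℂ) • (1 : V →ₗ[ℂ] V) by simp] at h1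
      exact smul_left_injective ℂ this h1
    have e1 : V.character g = c * d := by
      rw [FDRep.character, hc, map_smul, Module.End.one_eq_id, LinearMap.trace_id]
      simp [hd, smul_eq_mul]
    have e2 : V.character g⁻¹ = c' * d := by
      rw [FDRep.character, hc', map_smul, Module.End.one_eq_id, LinearMap.trace_id]
      simp [hd, smul_eq_mul]
    rw [e1, e2]
    calc c * d * (c' * d) = (c * c') * (d * d) := by ring
    _ = d * d := by rw [hcc']; ring
  have hcard : ((Fintype.card Γ : ℂ)) ≠ 0 := by exact_mod_cast Fintype.card_ne_zero
  have horth := char_orthonormal' V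
  rw [Finset.sum_congr rfl (fun g _ => hterm g), Finset.sum_const, Finset.card_univ,
    nsmul_eq_mul, smul_eq_mul, ← mul_assoc, invOf_mul_self, one_mul] at horth
  rw [hd] at horth
  have : (finrank ℂ V) * (finrank ℂ V) = 1 := by exact_mod_cast horth
  exact Nat.eq_one_of_mul_eq_one_right this

end RepLemmas

section Vanish
open SemidirectProduct CategoryTheory Module

lemma psi_vanish (p : ℕ) [Fact p.Prime] (hp2 : p ≠ 2)
    (ψr : Gp p → ℂ) (h1 : IsIrrChar (Gp p) ψr) (h2 : ψr 1 = (p : ℂ) - 1)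
    (u : (ZMod p)ˣ) (hu : u ≠ 1) : ψr (inr u) = 0 := by
  haveI : NeZero p := ⟨(Fact.out : p.Prime).ne_zero⟩
  have hp0 : (p : ℂ) ≠ 0 := by exact_mod_cast (Fact.out : p.Prime).ne_zero
  obtain ⟨V, hs, hchar⟩ := h1
  haveI := hs
  set ρ := V.ρ with hρdef
  set P : V →ₗ[ℂ] V := ∑ z : Multiplicative (ZMod p), ρ (inl z) with hP
  have hcardZ : (Fintype.card (Multiplicative (ZMod p))) = p := by
    rw [Fintype.card_multiplicative, ZMod.card]
  -- commutation of elements with inl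
  have hmul1 : ∀ (g : Gp p) (z : Multiplicative (ZMod p)),
      g * inl z = inl ((mulAction p) g.right z) * g := by
    intro g z
    ext
    · show g.left * (mulAction p g.right) z = (mulAction p g.right) z * ((mulAction p) 1 g.left)
      rw [map_one]
      show g.left * (mulAction p g.right) z = (mulAction p g.right) z * g.left
      exact mul_comm _ _
    · simp [SemidirectProduct.mul_right]
  have hPcomm : ∀ g : Gp p, P * ρ g = ρ g * P := by
    intro g
    rw [hP, Finset.sum_mul, Finset.mul_sum]
    calc ∑ z : Multiplicative (ZMod p), ρ (inl z) * ρ g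
        = ∑ z : Multiplicative (ZMod p), ρ (inl ((mulAction p g.right) z)) * ρ g :=
          (Equiv.sum_comp ((mulAction p) g.right).toEquiv
            (fun z => ρ (inl z) * ρ g)).symm
      _ = ∑ z : Multiplicative (ZMod p), ρ g * ρ (inl z) := by
          refine Finset.sum_congr rfl fun z _ => ?_
          rw [← map_mul, ← map_mul, ← hmul1]
  obtain ⟨c, hc⟩ := ofMor_scalar V P hPcomm
  have hsummul : ∀ z : Multiplicative (ZMod p),
      ρ (inl z) * P = P := by
    intro z
    rw [hP, Finset.mul_sum]
    calc ∑ w : Multiplicative (ZMod p), ρ (inl z) * ρ (inl w)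
        = ∑ w : Multiplicative (ZMod p), ρ (inl (z * w)) := by
          refine Finset.sum_congr rfl fun w _ => ?_
          rw [← map_mul, ← map_mul]
      _ = ∑ w : Multiplicative (ZMod p), ρ (inl w) :=
          Equiv.sum_comp (Equiv.mulLeft z) (fun w => ρ (inl w))
  have hPP : P * P = (p : ℂ) • P := by
    nth_rewrite 1 [hP]
    rw [Finset.sum_mul]
    rw [Finset.sum_congr rfl (fun z _ => hsummul z), Finset.sum_const, Finset.card_univ,
      hcardZ, Nat.cast_smul_eq_nsmul]
  have hcc : c = 0 ∨ c = (p : ℂ) := by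
    have h6 := hPP
    rw [hc, smul_mul_assoc, mul_smul_comm, one_mul, smul_smul, smul_smul] at h6
    have h7 : c * c = (p : ℂ) * c := smul_left_injective ℂ (id_ne_zero' V) h6
    have h8 : c * (c - p) = 0 := by ring_nf; linear_combination h7
    rcases mul_eq_zero.mp h8 with h | h
    · exact Or.inl h
    · exact Or.inr (by linear_combination h)
  rcases hcc with hc0 | hcp
  · -- P = 0, the main case
    have hPzero : P = 0 := by rw [hc, hc0, zero_smul]
    have h5 : ρ (inr u) * P = ∑ z : Multiplicative (ZMod p), ρ ((inr u : Gp p) * inl z) := by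
      rw [hP, Finset.mul_sum]
      exact Finset.sum_congr rfl fun z _ => (map_mul ρ _ _).symm
    have key : ∑ z : Multiplicative (ZMod p), V.character ((inr u : Gp p) * inl z) = 0 := by
      have h6 : ∑ z : Multiplicative (ZMod p), ρ ((inr u : Gp p) * inl z) = 0 := by
        rw [← h5, hPzero, mul_zero]
      have := congrArg (LinearMap.trace ℂ V) h6
      rw [map_sum, map_zero] at this
      exact this
    have hne : (1 : ZMod p) - (u : ZMod p) ≠ 0 := by
      intro hzero
      apply hu
      have : (u : ZMod p) = 1 := by linear_combination -hzero
      exact Units.ext this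
    have hconst : ∀ z : Multiplicative (ZMod p),
        V.character ((inr u : Gp p) * inl z) = V.character (inr u) := by
      intro z
      set a : Multiplicative (ZMod p) :=
        Multiplicative.ofAdd (((1 : ZMod p) - (u : ZMod p))⁻¹ * ((u : ZMod p) * z.toAdd)) with ha
      have hconj : (inl a : Gp p) * inr u * (inl a)⁻¹ = (inr u : Gp p) * inl z := by
        have hact : ∀ (v : (ZMod p)ˣ) (x : Multiplicative (ZMod p)),
            (mulAction p v) x = Multiplicative.ofAdd ((v : ZMod p) * x.toAdd) := by
          intro v x
          show Multiplicative.ofAdd (v • x.toAdd) = _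
          rw [Units.smul_def, smul_eq_mul]
        ext
        · simp only [SemidirectProduct.mul_left, SemidirectProduct.mul_right,
            SemidirectProduct.inv_left, SemidirectProduct.inv_right, left_inl, right_inl,
            left_inr, right_inr, map_one, mul_one, one_mul, inv_one, MulAut.one_apply]
          rw [hact, hact]
          apply Multiplicative.toAdd.injective
          simp only [toAdd_mul, toAdd_ofAdd, toAdd_inv, ha]
          field_simp
          congr 1
          field_simp
          ring
        · simp [SemidirectProduct.mul_right]
      rw [← hconj]
      exact FDRep.char_conj V _ _
    rw [Finset.sum_congr rfl (fun z _ => hconst z), Finset.sum_const, Finset.card_univ,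
      hcardZ, nsmul_eq_mul] at key
    have : V.character (inr u) = 0 := by
      rcases mul_eq_zero.mp key with h | h
      · exact absurd h hp0
      · exact h
    rw [hchar]
    exact this
  · -- c = p: contradiction
    exfalso
    have htriv : ∀ z : Multiplicative (ZMod p), ρ (inl z) = 1 := by
      intro z
      have h3 := hsummul z
      rw [hc, hcp, mul_smul_comm, mul_one] at h3
      exact smul_right_injective _ hp0 h3
    have hrr : ∀ g : Gp p, ρ g = ρ (inr g.right) := by
      intro g
      conv_lhs => rw [← SemidirectProduct.inl_left_mul_inr_right g]
      rw [map_mul, htriv, one_mul]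
    have hcomm : ∀ g h : Gp p, ρ g * ρ h = ρ h * ρ g := by
      intro g h
      rw [hrr g, hrr h]
      calc ρ (inr g.right) * ρ (inr h.right) = ρ (inr (g.right * h.right)) := by
            rw [← map_mul, ← map_mul]
        _ = ρ (inr (h.right * g.right)) := by rw [mul_comm]
        _ = ρ (inr h.right) * ρ (inr g.right) := by rw [map_mul, map_mul]
    have hone := char_one_eq_one_of_comm V hcomm
    have hψ1 : ψr 1 = 1 := by
      rw [hchar]
      show V.character 1 = 1
      rw [FDRep.char_one, hone]
      norm_num
    rw [h2] at hψ1
    have : (p : ℂ) = 2 := by linear_combination hψ1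
    exact hp2 (by exact_mod_cast this)
end Vanish

lemma theta_one (p : ℕ) [Fact p.Prime] (θi : (ZMod p)ˣ → ℂ)
    (hθi : IsIrrChar ((ZMod p)ˣ) θi) : θi 1 = 1 := by
  obtain ⟨V, hs, hchar⟩ := hθi
  haveI := hs
  have hone := char_one_eq_one_of_comm V (fun g h => by
    rw [← map_mul, ← map_mul, mul_comm])
  rw [hchar]
  show V.character 1 = 1
  rw [FDRep.char_one, hone]
  norm_num

section Comb
open Finset

variable {k : ℕ}

lemma mem_orbitOf {π : Equiv.Perm (Fin k)} {x y : Fin k} :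
    y ∈ orbitOf π x ↔ π.SameCycle x y := by simp [orbitOf]

lemma mem_orbitReps {π : Equiv.Perm (Fin k)} {x : Fin k} :
    x ∈ orbitReps π ↔ ∀ y, π.SameCycle x y → x ≤ y := by simp [orbitReps]

lemma minPer_pos (τ : Equiv.Perm (Fin k)) (x : Fin k) :
    0 < Function.minimalPeriod ⇑τ x := by
  apply Function.IsPeriodicPt.minimalPeriod_pos (orderOf_pos τ)
  simp [Function.IsPeriodicPt, Function.IsFixedPt, Equiv.Perm.iterate_eq_pow,
    pow_orderOf_eq_one]

lemma list_range_prod {M : Type*} [CommMonoid M] (g : ℕ → M) (n : ℕ) :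
    ((List.range n).map g).prod = ∏ t ∈ Finset.range n, g t := by
  induction n with
  | zero => simp
  | succ n ih =>
      rw [List.range_succ, List.map_append, List.prod_append, Finset.prod_range_succ, ih]
      simp

lemma orbitOf_eq_image (π : Equiv.Perm (Fin k)) (x : Fin k) :
    orbitOf π x =
      (Finset.range (Function.minimalPeriod ⇑π⁻¹ x)).image (fun t => (π⁻¹ ^ t) x) := by
  have hpos := minPer_pos π⁻¹ x
  ext y
  rw [mem_orbitOf, Finset.mem_image]
  constructor
  · intro h
    have h' : (π⁻¹).SameCycle x y := Equiv.Perm.sameCycle_inv.mpr h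
    obtain ⟨i, _, hi⟩ := h'.exists_pow_eq'
    refine ⟨i % Function.minimalPeriod ⇑π⁻¹ x, Finset.mem_range.mpr (Nat.mod_lt _ hpos), ?_⟩
    show (π⁻¹ ^ (i % Function.minimalPeriod ⇑π⁻¹ x)) x = y
    rw [← Equiv.Perm.iterate_eq_pow] at hi ⊢
    rw [Function.iterate_mod_minimalPeriod_eq]
    exact hi
  · rintro ⟨t, _, rfl⟩
    have : (π⁻¹).SameCycle x ((π⁻¹ ^ t) x) := ⟨(t : ℤ), by rw [zpow_natCast]⟩
    exact Equiv.Perm.sameCycle_inv.mp this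

lemma injOn_pow (π : Equiv.Perm (Fin k)) (x : Fin k) :
    Set.InjOn (fun t => (π⁻¹ ^ t) x) (Finset.range (Function.minimalPeriod ⇑π⁻¹ x)) := by
  intro s hs t ht hst
  rw [Finset.coe_range] at hs ht
  exact Function.iterate_injOn_Iio_minimalPeriod hs ht
    (by simpa [Equiv.Perm.iterate_eq_pow, ← Equiv.Perm.inv_def, inv_pow] using hst)

lemma card_orbitOf (π : Equiv.Perm (Fin k)) (x : Fin k) :
    (orbitOf π x).card = Function.minimalPeriod ⇑π⁻¹ x := by
  rw [orbitOf_eq_image, Finset.card_image_of_injOn (injOn_pow π x), Finset.card_range]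

lemma cycleProd_eq_prod_range {N : Type} [CommGroup N] (f : Fin k → N) (π : Equiv.Perm (Fin k))
    (x : Fin k) :
    cycleProd f π x = ∏ t ∈ Finset.range ((orbitOf π x).card), f ((π⁻¹ ^ t) x) := by
  rw [cycleProd, ← list_range_prod]
  simp [← inv_pow]

lemma cycleProd_eq_prod_orbit {N : Type} [CommGroup N] (f : Fin k → N)
    (π : Equiv.Perm (Fin k)) (x : Fin k) :
    cycleProd f π x = ∏ y ∈ orbitOf π x, f y := by
  rw [cycleProd_eq_prod_range, card_orbitOf, orbitOf_eq_image,
    Finset.prod_image (fun s hs t ht h => injOn_pow π x hs ht h)]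

lemma rep_unique {π : Equiv.Perm (Fin k)} {x y : Fin k} (hx : x ∈ orbitReps π)
    (hy : y ∈ orbitReps π) (h : π.SameCycle x y) : x = y :=
  le_antisymm (mem_orbitReps.mp hx y h) (mem_orbitReps.mp hy x h.symm)

/-- the representative of the orbit of `j` -/
def repOf (π : Equiv.Perm (Fin k)) (j : Fin k) : Fin k :=
  (orbitOf π j).min' ⟨j, mem_orbitOf.mpr (Equiv.Perm.SameCycle.refl π j)⟩

lemma repOf_sameCycle (π : Equiv.Perm (Fin k)) (j : Fin k) : π.SameCycle j (repOf π j) :=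
  mem_orbitOf.mp ((orbitOf π j).min'_mem _)

lemma repOf_mem_reps (π : Equiv.Perm (Fin k)) (j : Fin k) : repOf π j ∈ orbitReps π := by
  rw [mem_orbitReps]
  intro y hy
  exact Finset.min'_le _ y (mem_orbitOf.mpr ((repOf_sameCycle π j).trans hy))

lemma univ_eq_biUnion_orbits (π : Equiv.Perm (Fin k)) :
    (Finset.univ : Finset (Fin k)) = (orbitReps π).biUnion (fun x => orbitOf π x) := by
  ext j
  simp only [Finset.mem_univ, true_iff, Finset.mem_biUnion]
  exact ⟨repOf π j, repOf_mem_reps π j, mem_orbitOf.mpr (repOf_sameCycle π j).symm⟩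

lemma orbits_pairwise_disjoint (π : Equiv.Perm (Fin k)) :
    (↑(orbitReps π) : Set (Fin k)).PairwiseDisjoint (fun x => orbitOf π x) := by
  intro x hx y hy hxy
  simp only [Function.onFun]
  rw [Finset.disjoint_left]
  intro a hax hay
  exact hxy (rep_unique (Finset.mem_coe.mp hx) (Finset.mem_coe.mp hy)
    ((mem_orbitOf.mp hax).trans (mem_orbitOf.mp hay).symm))

lemma prod_eq_prod_reps {N : Type} [CommGroup N] (π : Equiv.Perm (Fin k)) (f : Fin k → N) :
    ∏ j, f j = ∏ x ∈ orbitReps π, cycleProd f π x := by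
  calc ∏ j, f j = ∏ j ∈ (orbitReps π).biUnion (fun x => orbitOf π x), f j := by
        rw [← univ_eq_biUnion_orbits]
    _ = ∏ x ∈ orbitReps π, ∏ j ∈ orbitOf π x, f j :=
        Finset.prod_biUnion (orbits_pairwise_disjoint π)
    _ = ∏ x ∈ orbitReps π, cycleProd f π x := by
        exact Finset.prod_congr rfl fun x _ => (cycleProd_eq_prod_orbit f π x).symm

lemma pow_apply_ne {π : Equiv.Perm (Fin k)} {x : Fin k} {t : ℕ} (ht0 : 0 < t)
    (htm : t < (orbitOf π x).card) : (π⁻¹ ^ t) x ≠ x := by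
  intro h
  rw [card_orbitOf] at htm
  have h0 : ((fun s => (π⁻¹ ^ s) x) t) = ((fun s => (π⁻¹ ^ s) x) 0) := by simpa using h
  have ht' : (t : ℕ) ∈ (↑(Finset.range (Function.minimalPeriod ⇑π⁻¹ x)) : Set ℕ) :=
    Finset.mem_coe.mpr (Finset.mem_range.mpr htm)
  have h0' : (0 : ℕ) ∈ (↑(Finset.range (Function.minimalPeriod ⇑π⁻¹ x)) : Set ℕ) :=
    Finset.mem_coe.mpr (Finset.mem_range.mpr (lt_of_le_of_lt (Nat.zero_le _) htm))
  have := injOn_pow π x ht' h0' h0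
  omega

lemma notrep_of_orbit_mem {π : Equiv.Perm (Fin k)} {x : Fin k} (hx : x ∈ orbitReps π)
    {t : ℕ} (ht : t ∈ Finset.Ioo 0 ((orbitOf π x).card)) : (π⁻¹ ^ t) x ∉ orbitReps π := by
  intro hmem
  rw [Finset.mem_Ioo] at ht
  have hsc : π.SameCycle x ((π⁻¹ ^ t) x) := by
    have : (π⁻¹).SameCycle x ((π⁻¹ ^ t) x) := ⟨(t : ℤ), by rw [zpow_natCast]⟩
    exact Equiv.Perm.sameCycle_inv.mp this
  exact pow_apply_ne ht.1 ht.2 (rep_unique hx hmem hsc).symm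

lemma cycleProd_decomp {N : Type} [CommGroup N] (f : Fin k → N) (π : Equiv.Perm (Fin k))
    (x : Fin k) :
    cycleProd f π x = f x * ∏ t ∈ Finset.Ioo 0 ((orbitOf π x).card), f ((π⁻¹ ^ t) x) := by
  have hpos : 0 < (orbitOf π x).card := by rw [card_orbitOf]; exact minPer_pos π⁻¹ x
  rw [cycleProd_eq_prod_range]
  have h0 : (0 : ℕ) ∈ Finset.range ((orbitOf π x).card) := Finset.mem_range.mpr hpos
  rw [← Finset.prod_erase_mul _ _ h0]
  have : (Finset.range ((orbitOf π x).card)).erase 0 = Finset.Ioo 0 ((orbitOf π x).card) := by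
    ext t
    simp [Finset.mem_erase, Finset.mem_range, Finset.mem_Ioo, Nat.pos_iff_ne_zero]
  rw [this]
  simp [mul_comm]

lemma cycleProd_map {N M : Type} [Group N] [Group M] (ν : N →* M) (f : Fin k → N)
    (π : Equiv.Perm (Fin k)) (x : Fin k) :
    cycleProd (fun j => ν (f j)) π x = ν (cycleProd f π x) := by
  rw [cycleProd, cycleProd, map_list_prod, List.map_map]
  rfl

/-- replace the value at each orbit representative by the corresponding cycle product -/
def phiFun {N : Type} [CommGroup N] (π : Equiv.Perm (Fin k)) (f : Fin k → N) : Fin k → N :=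
  fun j => if j ∈ orbitReps π then cycleProd f π j else f j

def psiFun {N : Type} [CommGroup N] (π : Equiv.Perm (Fin k)) (g : Fin k → N) : Fin k → N :=
  fun j => if j ∈ orbitReps π then
      g j * (∏ t ∈ Finset.Ioo 0 ((orbitOf π j).card), g ((π⁻¹ ^ t) j))⁻¹
    else g j

lemma psiFun_phiFun {N : Type} [CommGroup N] (π : Equiv.Perm (Fin k)) (f : Fin k → N) :
    psiFun π (phiFun π f) = f := by
  funext j
  by_cases hj : j ∈ orbitReps π
  · simp only [psiFun, phiFun, if_pos hj]
    have htail : ∏ t ∈ Finset.Ioo 0 ((orbitOf π j).card),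
        (if (π⁻¹ ^ t) j ∈ orbitReps π then cycleProd f π ((π⁻¹ ^ t) j) else f ((π⁻¹ ^ t) j))
        = ∏ t ∈ Finset.Ioo 0 ((orbitOf π j).card), f ((π⁻¹ ^ t) j) :=
      Finset.prod_congr rfl fun t ht => if_neg (notrep_of_orbit_mem hj ht)
    rw [htail, cycleProd_decomp]
    exact mul_inv_cancel_right _ _
  · simp only [psiFun, phiFun, if_neg hj]

lemma phiFun_psiFun {N : Type} [CommGroup N] (π : Equiv.Perm (Fin k)) (g : Fin k → N) :
    phiFun π (psiFun π g) = g := by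
  funext j
  by_cases hj : j ∈ orbitReps π
  · simp only [psiFun, phiFun, if_pos hj]
    rw [cycleProd_decomp]
    have htail : ∏ t ∈ Finset.Ioo 0 ((orbitOf π j).card), psiFun π g ((π⁻¹ ^ t) j)
        = ∏ t ∈ Finset.Ioo 0 ((orbitOf π j).card), g ((π⁻¹ ^ t) j) :=
      Finset.prod_congr rfl fun t ht => if_neg (notrep_of_orbit_mem hj ht)
    have hj' : psiFun π g j = g j * (∏ t ∈ Finset.Ioo 0 ((orbitOf π j).card), g ((π⁻¹ ^ t) j))⁻¹ :=
      if_pos hj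
    rw [htail, hj', inv_mul_cancel_right]
  · simp only [phiFun, if_neg hj, psiFun]

/-- the bijection `f ↦ phiFun π f` -/
def phiEquiv {N : Type} [CommGroup N] (π : Equiv.Perm (Fin k)) :
    (Fin k → N) ≃ (Fin k → N) where
  toFun := phiFun π
  invFun := psiFun π
  left_inv := psiFun_phiFun π
  right_inv := phiFun_psiFun π

end Comb

/-- For every irreducible character `θ_i` of `H = (ZMod p)ˣ` and every
permutation `π` of `Fin k`:
`∑_{f : Fin k → H} ψ̃_r^k (f ; π) ⬝ conj (θ̃_i^k (f ; π)) = (p−1)^k`. -/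
theorem statement10 (p : ℕ) [Fact p.Prime] (hp2 : p ≠ 2) (k : ℕ) (hk : 1 ≤ k)
    (θi : (ZMod p)ˣ → ℂ) (hθi : IsIrrChar ((ZMod p)ˣ) θi)
    (ψr : Gp p → ℂ) (h1 : IsIrrChar (Gp p) ψr) (h2 : ψr 1 = (p : ℂ) - 1)
    (π : Equiv.Perm (Fin k)) :
    ∑ f : Fin k → (ZMod p)ˣ,
        cycleCF ψr (⟨fun j => SemidirectProduct.inr (f j), π⟩ : Wr (Gp p) k) *
          (starRingEnd ℂ) (thetaTilde θi (⟨f, π⟩ : Wr ((ZMod p)ˣ) k)) =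
      ((p : ℂ) - 1) ^ k := by
  classical
  have hθ1 := theta_one p θi hθi
  have hvan := psi_vanish p hp2 ψr h1 h2
  set A : ℂ := (p : ℂ) - 1 with hA
  set a : (ZMod p)ˣ → ℂ := fun u => if u = 1 then A else 0 with ha
  have hψa : ∀ u : (ZMod p)ˣ, ψr (SemidirectProduct.inr u) = a u := by
    intro u
    by_cases hu : u = 1
    · rw [hu, ha]
      simp only [if_pos rfl]
      rw [map_one]
      exact h2
    · rw [ha]
      simp only [if_neg hu]
      exact hvan u hu
  -- rewrite each summand
  have hsummand : ∀ f : Fin k → (ZMod p)ˣ,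
      cycleCF ψr (⟨fun j => SemidirectProduct.inr (f j), π⟩ : Wr (Gp p) k) *
        (starRingEnd ℂ) (thetaTilde θi (⟨f, π⟩ : Wr ((ZMod p)ˣ) k)) =
      ∏ x ∈ orbitReps π, a (cycleProd f π x) := by
    intro f
    have hcy : cycleCF ψr (⟨fun j => SemidirectProduct.inr (f j), π⟩ : Wr (Gp p) k)
        = ∏ x ∈ orbitReps π, a (cycleProd f π x) := by
      show ∏ x ∈ orbitReps π, ψr (cycleProd (fun j => (SemidirectProduct.inr (f j) : Gp p)) π x)
          = ∏ x ∈ orbitReps π, a (cycleProd f π x)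
      refine Finset.prod_congr rfl fun x _ => ?_
      rw [cycleProd_map (SemidirectProduct.inr : (ZMod p)ˣ →* Gp p) f π x, hψa]
    have hth : thetaTilde θi (⟨f, π⟩ : Wr ((ZMod p)ˣ) k) = θi (∏ j, f j) := rfl
    rw [hcy, hth]
    by_cases hall : ∀ x ∈ orbitReps π, cycleProd f π x = 1
    · have hprod1 : (∏ j, f j) = 1 := by
        rw [prod_eq_prod_reps π f]
        exact Finset.prod_eq_one hall
      rw [hprod1, hθ1]
      simp
    · push_neg at hall
      obtain ⟨x, hx, hxne⟩ := hall
      have hz : ∏ x ∈ orbitReps π, a (cycleProd f π x) = 0 :=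
        Finset.prod_eq_zero hx (by rw [ha]; simp [hxne])
      rw [hz, zero_mul]
  rw [Finset.sum_congr rfl fun f _ => hsummand f]
  -- reindex by the bijection phiEquiv
  have hswap : ∀ f : Fin k → (ZMod p)ˣ,
      ∏ x ∈ orbitReps π, a (cycleProd f π x) =
      ∏ x ∈ orbitReps π, a ((phiEquiv (N := (ZMod p)ˣ) π f) x) :=
    fun f => Finset.prod_congr rfl fun x hx => by
      rw [show (phiEquiv (N := (ZMod p)ˣ) π f) x = cycleProd f π x from if_pos hx]
  rw [Finset.sum_congr rfl fun f _ => hswap f]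
  rw [Fintype.sum_equiv (phiEquiv (N := (ZMod p)ˣ) π)
    (fun f => ∏ x ∈ orbitReps π, a ((phiEquiv (N := (ZMod p)ˣ) π) f x))
    (fun g => ∏ x ∈ orbitReps π, a (g x)) (fun f => rfl)]
  -- expand the product over reps to a product over all of Fin k
  have hext : ∀ g : Fin k → (ZMod p)ˣ,
      ∏ x ∈ orbitReps π, a (g x) = ∏ j, (if j ∈ orbitReps π then a (g j) else 1) := by
    intro g
    rw [Finset.prod_ite_mem Finset.univ (orbitReps π) (fun j => a (g j)), Finset.univ_inter]
  rw [Finset.sum_congr rfl fun g _ => hext g]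
  -- Fubini
  rw [← Fintype.prod_sum (fun j (v : (ZMod p)ˣ) => if j ∈ orbitReps π then a v else 1)]
  -- each factor equals A
  have hcard : (Fintype.card (ZMod p)ˣ : ℂ) = A := by
    rw [ZMod.card_units p, hA]
    have h1p : 1 ≤ p := (Fact.out : p.Prime).one_lt.le
    push_cast [Nat.cast_sub h1p]
    ring
  have hfac : ∀ j : Fin k, (∑ v : (ZMod p)ˣ, if j ∈ orbitReps π then a v else 1) = A := by
    intro j
    by_cases hj : j ∈ orbitReps π
    · simp only [if_pos hj, ha]
      rw [Finset.sum_ite_eq' Finset.univ (1 : (ZMod p)ˣ) (fun _ => A)]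
      simp
    · simp only [if_neg hj]
      rw [Finset.sum_const, Finset.card_univ, nsmul_eq_mul, hcard, mul_one]
  rw [Finset.prod_congr rfl fun j _ => hfac j, Finset.prod_const, Finset.card_univ,
    Fintype.card_fin]
end BrGrFormal
end
end
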